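/- Over an algebraically closed field F, for α, β ∈ F the algebras E^α_{5,23} : e₁² = e₃ + e₄, e₂² = e₃ + α e₅, e₃² = e₄, e₄² = e₅ and E^β_{5,23} are isomorphic if and only if α = β. -/
import Mathlib


/-- Multiplication of `E₅,₂₃^α : e₁² = e₃ + e₄, e₂² = e₃ + α e₅, e₃² = e₄, e₄² = e₅`
on `F⁵` (all other products of natural basis vectors are zero). -/
def mulE523 {F : Type*} [Field F] (α : F) :
    (Fin 5 → F) → (Fin 5 → F) → (Fin 5 → F) :=
  fun x y => ![0, 0, x 0 * y 0 + x 1 * y 1, x 0 * y 0 + x 2 * y 2,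
    α * (x 1 * y 1) + x 3 * y 3]

/-- Over an algebraically closed field `F`, for `α, β ∈ F` the algebras
`E₅,₂₃^α` and `E₅,₂₃^β` are isomorphic if and only if `α = β`. -/
theorem stmt17 {F : Type*} [Field F] [IsAlgClosed F] (α β : F) :
    (∃ σ : (Fin 5 → F) ≃ₗ[F] (Fin 5 → F),
        ∀ x y, σ (mulE523 α x y) = mulE523 β (σ x) (σ y)) ↔ α = β := by
  constructor
  · rintro ⟨σ, h⟩
    set v0 : Fin 5 → F := ![1,0,0,0,0] with hv0
    set v1 : Fin 5 → F := ![0,1,0,0,0] with hv1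
    set v2 : Fin 5 → F := ![0,0,1,0,0] with hv2
    set v3 : Fin 5 → F := ![0,0,0,1,0] with hv3
    set v4 : Fin 5 → F := ![0,0,0,0,1] with hv4
    set A := σ v0 with hA
    set B := σ v1 with hB
    set C := σ v2 with hC
    set D := σ v3 with hD
    set E := σ v4 with hE
    -- annihilator: E kills everything
    have hAnn : ∀ z, mulE523 β E z = 0 := by
      intro z
      have h4 := h v4 (σ.symm z)
      rw [σ.apply_symm_apply] at h4
      have h0 : mulE523 α v4 (σ.symm z) = 0 := by
        funext i; fin_cases i <;> simp [mulE523, hv4]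
      rw [h0, map_zero] at h4
      exact h4.symm
    have hE0 : E 0 = 0 := by simpa [mulE523, hv0] using congr_fun (hAnn v0) 2
    have hE1 : E 1 = 0 := by simpa [mulE523, hv1, hE0] using congr_fun (hAnn v1) 2
    have hE2 : E 2 = 0 := by simpa [mulE523, hv2, hE0] using congr_fun (hAnn v2) 3
    have hE3 : E 3 = 0 := by simpa [mulE523, hv3, hE1] using congr_fun (hAnn v3) 4
    -- D multiplies into the span of E
    have hDmul : ∀ z, mulE523 β D z = (σ.symm z 3) • E := by
      intro z
      have h3 := h v3 (σ.symm z)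
      rw [σ.apply_symm_apply] at h3
      have h0 : mulE523 α v3 (σ.symm z) = (σ.symm z 3) • v4 := by
        funext i; fin_cases i <;> simp [mulE523, hv3, hv4]
      rw [h0, map_smul] at h3
      exact h3.symm
    have hD0 : D 0 = 0 := by simpa [mulE523, hv0, hE2] using congr_fun (hDmul v0) 2
    have hD1 : D 1 = 0 := by simpa [mulE523, hv1, hE2, hD0] using congr_fun (hDmul v1) 2
    have hD2 : D 2 = 0 := by simpa [mulE523, hv2, hE3, hD0] using congr_fun (hDmul v2) 3
    -- C multiplies into the span of D (mod E)
    have hCmul : ∀ z, mulE523 β C z = (σ.symm z 2) • D := by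
      intro z
      have h2 := h v2 (σ.symm z)
      rw [σ.apply_symm_apply] at h2
      have h0 : mulE523 α v2 (σ.symm z) = (σ.symm z 2) • v3 := by
        funext i; fin_cases i <;> simp [mulE523, hv2, hv3]
      rw [h0, map_smul] at h2
      exact h2.symm
    have hC0 : C 0 = 0 := by simpa [mulE523, hv0, hD2] using congr_fun (hCmul v0) 2
    have hC1 : C 1 = 0 := by simpa [mulE523, hv1, hD2, hC0] using congr_fun (hCmul v1) 2
    -- structural equations from products of basis vectors
    have h22 : D = mulE523 β C C := by
      have := h v2 v2
      have h0 : mulE523 α v2 v2 = v3 := by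
        funext i; fin_cases i <;> simp [mulE523, hv2, hv3]
      rwa [h0] at this
    have hD3 : D 3 = C 2 * C 2 := by
      have := congr_fun h22 3; simpa [mulE523, hC0] using this
    have hD4 : D 4 = C 3 * C 3 := by
      have := congr_fun h22 4; simpa [mulE523, hC1] using this
    have h33 : E = mulE523 β D D := by
      have := h v3 v3
      have h0 : mulE523 α v3 v3 = v4 := by
        funext i; fin_cases i <;> simp [mulE523, hv3, hv4]
      rwa [h0] at this
    have hE4 : E 4 = D 3 * D 3 := by
      have := congr_fun h33 4; simpa [mulE523, hD1] using this
    -- E ≠ 0, hence C 2 ≠ 0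
    have hE4ne : E 4 ≠ 0 := by
      intro h0
      have hEz : E = 0 := by
        funext i; fin_cases i <;> simp [hE0, hE1, hE2, hE3, h0]
      have : v4 = 0 := by
        have := σ.injective (a₁ := v4) (a₂ := 0) (by rw [map_zero, ← hE, hEz])
        exact this
      have := congr_fun this 4
      simp [hv4] at this
    have hC2ne : C 2 ≠ 0 := by
      intro h0
      apply hE4ne
      rw [hE4, hD3, h0]; ring
    -- C 3 = 0
    have h23 : mulE523 β C D = 0 := by
      have := h v2 v3
      have h0 : mulE523 α v2 v3 = 0 := by
        funext i; fin_cases i <;> simp [mulE523, hv2, hv3]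
      rw [h0, map_zero] at this
      exact this.symm
    have hC3 : C 3 = 0 := by
      have := congr_fun h23 4
      simp [mulE523, hC1, hD3] at this
      rcases this with h' | h'
      · exact h'
      · exact absurd h' hC2ne
    -- A, B structure
    have h02 : mulE523 β A C = 0 := by
      have := h v0 v2
      have h0 : mulE523 α v0 v2 = 0 := by
        funext i; fin_cases i <;> simp [mulE523, hv0, hv2]
      rw [h0, map_zero] at this
      exact this.symm
    have hA2 : A 2 = 0 := by
      have := congr_fun h02 3
      simp [mulE523, hC0] at this
      rcases this with h' | h'
      · exact h'
      · exact absurd h' hC2ne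
    have h12 : mulE523 β B C = 0 := by
      have := h v1 v2
      have h0 : mulE523 α v1 v2 = 0 := by
        funext i; fin_cases i <;> simp [mulE523, hv1, hv2]
      rw [h0, map_zero] at this
      exact this.symm
    have hB2 : B 2 = 0 := by
      have := congr_fun h12 3
      simp [mulE523, hC0] at this
      rcases this with h' | h'
      · exact h'
      · exact absurd h' hC2ne
    have hD3ne : D 3 ≠ 0 := by
      rw [hD3]; exact mul_ne_zero hC2ne hC2ne
    have h03 : mulE523 β A D = 0 := by
      have := h v0 v3
      have h0 : mulE523 α v0 v3 = 0 := by
        funext i; fin_cases i <;> simp [mulE523, hv0, hv3]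
      rw [h0, map_zero] at this
      exact this.symm
    have hA3 : A 3 = 0 := by
      have := congr_fun h03 4
      simp [mulE523, hD1] at this
      rcases this with h' | h'
      · exact h'
      · exact absurd h' hD3ne
    have h13 : mulE523 β B D = 0 := by
      have := h v1 v3
      have h0 : mulE523 α v1 v3 = 0 := by
        funext i; fin_cases i <;> simp [mulE523, hv1, hv3]
      rw [h0, map_zero] at this
      exact this.symm
    have hB3 : B 3 = 0 := by
      have := congr_fun h13 4
      simp [mulE523, hD1] at this
      rcases this with h' | h'
      · exact h'
      · exact absurd h' hD3ne
    -- squares of v0 and v1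
    have h00 : C + D = mulE523 β A A := by
      have := h v0 v0
      have h0 : mulE523 α v0 v0 = v2 + v3 := by
        funext i; fin_cases i <;> simp [mulE523, hv0, hv2, hv3]
      rwa [h0, map_add] at this
    have h00c2 : C 2 = A 0 * A 0 + A 1 * A 1 := by
      have := congr_fun h00 2
      simpa [mulE523, hD2] using this
    have h00c3 : D 3 = A 0 * A 0 := by
      have := congr_fun h00 3
      simpa [mulE523, hC3, hA2] using this
    have h00c4 : C 4 = β * (A 1 * A 1) := by
      have := congr_fun h00 4
      simpa [mulE523, hD4, hC3, hA3] using this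
    have h11 : C + α • E = mulE523 β B B := by
      have := h v1 v1
      have h0 : mulE523 α v1 v1 = v2 + α • v4 := by
        funext i; fin_cases i <;> simp [mulE523, hv1, hv2, hv4]
      rwa [h0, map_add, map_smul] at this
    have h11c2 : C 2 = B 0 * B 0 + B 1 * B 1 := by
      have := congr_fun h11 2
      simpa [mulE523, hE2] using this
    have hB0 : B 0 = 0 := by
      have := congr_fun h11 3
      simp [mulE523, hE3, hC3, hB2] at this
      exact this
    have h11c4 : C 4 + α * E 4 = β * (B 1 * B 1) := by
      have := congr_fun h11 4
      simpa [mulE523, hB3, Pi.smul_apply, smul_eq_mul] using this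
    -- A 1 * B 1 = 0 and B 1 ≠ 0
    have h01 : mulE523 β A B = 0 := by
      have := h v0 v1
      have h0 : mulE523 α v0 v1 = 0 := by
        funext i; fin_cases i <;> simp [mulE523, hv0, hv1]
      rw [h0, map_zero] at this
      exact this.symm
    have hAB : A 1 * B 1 = 0 := by
      have := congr_fun h01 2
      simpa [mulE523, hB0] using this
    have hB1ne : B 1 ≠ 0 := by
      intro h0
      have hBz : B = (B 4 / E 4) • E := by
        funext i
        fin_cases i <;>
          simp [hB0, h0, hB2, hB3, hE0, hE1, hE2, hE3, div_mul_cancel₀, hE4ne,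
            Pi.smul_apply, smul_eq_mul]
      have : v1 = (B 4 / E 4) • v4 := by
        apply σ.injective
        rw [map_smul, ← hE, ← hB]
        exact hBz
      have := congr_fun this 1
      simp [hv1, hv4] at this
    have hA1 : A 1 = 0 := by
      rcases mul_eq_zero.mp hAB with h' | h'
      · exact h'
      · exact absurd h' hB1ne
    -- conclude
    have hC2 : C 2 = 1 := by
      have h2 : C 2 * C 2 = C 2 * 1 := by
        rw [mul_one, ← hD3, h00c3, h00c2, hA1]; ring
      exact mul_left_cancel₀ hC2ne h2
    have hE4v : E 4 = 1 := by rw [hE4, hD3, hC2]; ring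
    have hC4 : C 4 = 0 := by rw [h00c4, hA1]; ring
    have hB1 : B 1 * B 1 = 1 := by
      have := h11c2
      rw [hB0, hC2] at this
      linear_combination -this
    have : C 4 + α * E 4 = β * (B 1 * B 1) := h11c4
    rw [hC4, hE4v, hB1] at this
    linear_combination this
  · rintro rfl
    exact ⟨LinearEquiv.refl F _, fun x y => rfl⟩
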